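/- Let G be a (τ+1)-claw-free graph with vertex weights w : V → ℝ≥0, meaning that for every vertex v, every set of pairwise non-adjacent neighbors of v has size at most τ. Then the greedy algorithm that considers vertices in decreasing order of weight and adds a vertex to the solution whenever it is non-adjacent to all previously added vertices returns an independent set I_ALG with w(I_ALG) ≥ (1/τ) · w(I_OPT), where I_OPT is a maximum weight independent set of G. -/

import Mathlib

/-- Greedy independent set: process the list in order, adding a vertex whenever it is
non-adjacent to all previously added vertices. -/
noncomputable def greedySelect {V : Type*} [DecidableEq V] (adj : V → V → Prop) :
    List V → Finset V → Finset V
  | [], acc => acc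
  | v :: rest, acc =>
    haveI := Classical.propDecidable (∀ u ∈ acc, ¬ adj v u)
    if ∀ u ∈ acc, ¬ adj v u then greedySelect adj rest (insert v acc)
    else greedySelect adj rest acc

lemma greedySelect_subset {V : Type*} [DecidableEq V] (adj : V → V → Prop) :
    ∀ (l : List V) (acc : Finset V), acc ⊆ greedySelect adj l acc := by
  intro l
  induction l with
  | nil => intro acc; rw [greedySelect]
  | cons a rest ih =>
    intro acc
    rw [greedySelect]
    split
    · exact (Finset.subset_insert a acc).trans (ih _)
    · exact ih acc

lemma greedySelect_charge {V : Type*} [DecidableEq V] (adj : V → V → Prop) (w : V → ℝ) :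
    ∀ (l : List V), l.Pairwise (fun x y => w y ≤ w x) → ∀ (acc : Finset V),
      (∀ u ∈ acc, ∀ v ∈ l, w v ≤ w u) → ∀ v ∈ l,
      v ∈ greedySelect adj l acc ∨
        ∃ g ∈ greedySelect adj l acc, adj v g ∧ w v ≤ w g := by
  intro l
  induction l with
  | nil => intro _ acc _ v hv; simp at hv
  | cons a rest ih =>
    intro hsort acc hacc v hv
    rw [greedySelect]
    split
    · rename_i hcond
      rcases List.mem_cons.1 hv with rfl | hv
      · left
        exact greedySelect_subset adj rest _ (Finset.mem_insert_self v acc)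
      · refine ih hsort.of_cons (insert a acc) ?_ v hv
        intro u hu x hx
        rcases Finset.mem_insert.1 hu with rfl | hu
        · exact (List.pairwise_cons.1 hsort).1 x hx
        · exact hacc u hu x (List.mem_cons_of_mem a hx)
    · rename_i hcond
      push_neg at hcond
      rcases List.mem_cons.1 hv with rfl | hv
      · obtain ⟨u, hu, hadj⟩ := hcond
        right
        exact ⟨u, greedySelect_subset adj rest acc hu, hadj,
          hacc u hu v (List.mem_cons_self (a := v) (l := rest))⟩
      · refine ih hsort.of_cons acc ?_ v hv
        intro u hu x hx
        exact hacc u hu x (List.mem_cons_of_mem a hx)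

theorem greedy_claw_free_approximation {V : Type*} [Fintype V] [DecidableEq V]
    (G : SimpleGraph V) (w : V → ℝ) (hw : ∀ v, 0 ≤ w v)
    (τ : ℕ) (hτ : 1 ≤ τ)
    (hclaw : ∀ v : V, ∀ S : Finset V,
      (∀ u ∈ S, G.Adj v u) →
      (∀ u ∈ S, ∀ u' ∈ S, u ≠ u' → ¬ G.Adj u u') →
      S.card ≤ τ)
    (l : List V) (hsort : l.Pairwise fun x y => w y ≤ w x)
    (hnodup : l.Nodup) (hall : ∀ v : V, v ∈ l)
    (I : Finset V) (hI : ∀ u ∈ I, ∀ v ∈ I, ¬ G.Adj u v) :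
    (1 / (τ : ℝ)) * ∑ v ∈ I, w v ≤ ∑ v ∈ greedySelect G.Adj l ∅, w v := by
  set A := greedySelect G.Adj l ∅ with hA
  have hτ0 : (0:ℝ) < τ := by exact_mod_cast hτ
  rw [one_div, inv_mul_le_iff₀ hτ0]
  -- charging: each v has a witness in A
  have hcharge : ∀ v : V, ∃ g ∈ A, (v = g ∨ G.Adj v g) ∧ w v ≤ w g := by
    intro v
    have := greedySelect_charge G.Adj w l hsort ∅ (by simp) v (hall v)
    rcases this with hv | ⟨g, hg, hadj, hwg⟩
    · exact ⟨v, hv, Or.inl rfl, le_refl _⟩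
    · exact ⟨g, hg, Or.inr hadj, hwg⟩
  classical
  set f : V → V := fun v => (hcharge v).choose with hf
  have hfA : ∀ v, f v ∈ A := fun v => (hcharge v).choose_spec.1
  have hfp : ∀ v, (v = f v ∨ G.Adj v (f v)) ∧ w v ≤ w (f v) :=
    fun v => (hcharge v).choose_spec.2
  have key : ∑ v ∈ I, w v = ∑ g ∈ A, ∑ v ∈ I.filter (fun v => f v = g), w v :=
    (Finset.sum_fiberwise_of_maps_to (fun v _ => hfA v) w).symm
  rw [key, Finset.mul_sum]
  apply Finset.sum_le_sum
  intro g hg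
  set F := I.filter (fun v => f v = g) with hF
  have hwF : ∀ v ∈ F, w v ≤ w g := by
    intro v hv
    have := (Finset.mem_filter.1 hv).2
    calc w v ≤ w (f v) := (hfp v).2
    _ = w g := by rw [this]
  have hcard : F.card ≤ τ := by
    by_cases hgF : g ∈ F
    · have hsub : F ⊆ {g} := by
        intro v hv
        rw [Finset.mem_singleton]
        by_contra hne
        have hvI : v ∈ I := (Finset.mem_filter.1 hv).1
        have hgI : g ∈ I := (Finset.mem_filter.1 hgF).1
        have hfv : f v = g := (Finset.mem_filter.1 hv).2
        rcases (hfp v).1 with h1 | h1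
        · exact hne (h1.trans hfv)
        · rw [hfv] at h1
          exact hI v hvI g hgI h1
      calc F.card ≤ ({g} : Finset V).card := Finset.card_le_card hsub
      _ = 1 := Finset.card_singleton g
      _ ≤ τ := hτ
    · apply hclaw g F
      · intro u hu
        have hfu : f u = g := (Finset.mem_filter.1 hu).2
        rcases (hfp u).1 with h1 | h1
        · exact absurd ((h1.trans hfu) ▸ hu) hgF
        · rw [hfu] at h1; exact h1.symm
      · intro u hu u' hu' hne
        exact hI u (Finset.mem_filter.1 hu).1 u' (Finset.mem_filter.1 hu').1
  calc ∑ v ∈ F, w v ≤ F.card • w g := Finset.sum_le_card_nsmul F w (w g) hwF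
  _ = (F.card : ℝ) * w g := nsmul_eq_mul _ _
  _ ≤ (τ : ℝ) * w g := by
      apply mul_le_mul_of_nonneg_right _ (hw g)
      exact_mod_cast hcard
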